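/- arXiv:2211.15431 — 2 statements merged into one kernel-verified Lean document; each statement's English description precedes it below -/
import Mathlib

section
/- The set of fixed points of Ψ^T, i.e. {(K*, P*, τ*) ∈ 𝔻^T : (K*, P*, τ*) = Ψ^T(K*, P*, τ*)}, is nonempty and forms a complete lattice in 𝔻^T under the componentwise order; in particular there exist a greatest clearing solution (K^↑, P^↑, τ^↑) and a least clearing solution (K^↓, P^↓, τ^↓) with (K^↓, P^↓, τ^↓) ≤ (K^↑, P^↑, τ^↑). -/
open MeasureTheory

namespace Paper

open Classical in
/-- real-valued indicator of a proposition -/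
noncomputable def indR (p : Prop) : ℝ := if p then 1 else 0

open Classical in
/-- boolean indicator of a proposition -/
noncomputable def indB (p : Prop) : Bool := if p then true else false

/-- The atom of the σ-algebra `m` containing the point `ω`:
the intersection of all `m`-measurable sets containing `ω`. -/
def atomOf {Ω : Type*} (m : MeasurableSpace Ω) (ω : Ω) : Set Ω :=
  ⋂₀ {s : Set Ω | MeasurableSet[m] s ∧ ω ∈ s}

/-- The set `S`, with the order induced from the ambient preorder, is a nonempty complete
lattice: it has a greatest and a least element and every subset of `S` has a least upper
bound and a greatest lower bound within `S`. -/
def LatticeStructure {X : Type*} [Preorder X] (S : Set X) : Prop :=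
  S.Nonempty ∧
  (∃ top ∈ S, ∀ z ∈ S, z ≤ top) ∧
  (∃ bot ∈ S, ∀ z ∈ S, bot ≤ z) ∧
  (∀ A ⊆ S,
    (∃ u ∈ S, (∀ a ∈ A, a ≤ u) ∧ ∀ w ∈ S, (∀ a ∈ A, a ≤ w) → u ≤ w) ∧
    (∃ v ∈ S, (∀ a ∈ A, v ≤ a) ∧ ∀ w ∈ S, (∀ a ∈ A, w ≤ a) → w ≤ v))

/-- The space of triples `(K, P, τ)`: capital process, survival-probability process,
default-time vector, with the componentwise (pointwise) order. -/
abbrev Tri (Ω : Type*) (n ℓ : ℕ) :=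
  (Fin (ℓ+1) → Ω → Fin n → ℝ) × (Fin (ℓ+1) → Ω → Fin n → ℝ) × (Fin n → Ω → ℝ)

/-- Data of the single-maturity interbank model. -/
structure SM (Ω : Type*) (n ℓ : ℕ) where
  /-- maturity -/
  T : ℝ
  /-- times `0 = t 0 < t 1 < ... < t ℓ = T` -/
  t : Fin (ℓ+1) → ℝ
  /-- external asset process -/
  x : Fin (ℓ+1) → Ω → Fin n → ℝ
  /-- interbank liabilities -/
  L : Fin n → Fin n → ℝ
  /-- external liabilities -/
  L0 : Fin n → ℝ
  /-- recovery rate -/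
  β : ℝ
  /-- risk-free rate -/
  r : ℝ

namespace SM

variable {Ω : Type*} {n ℓ : ℕ}

/-- total liabilities `p̄_i` -/
noncomputable def pbar (M : SM Ω n ℓ) (i : Fin n) : ℝ := (∑ j, M.L i j) + M.L0 i

/-- discount factor `e^{-r (T - t l)}` -/
noncomputable def disc (M : SM Ω n ℓ) (l : Fin (ℓ+1)) : ℝ :=
  Real.exp (-(M.r * (M.T - M.t l)))

/-- the capital component `Ψ^T_K` of the clearing map -/
noncomputable def ΨK (M : SM Ω n ℓ) (l : Fin (ℓ+1)) (Pt : Ω → Fin n → ℝ)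
    (ω : Ω) (i : Fin n) : ℝ :=
  M.x l ω i + M.disc l * (∑ j, M.L j i * (M.β + (1 - M.β) * Pt ω j))
    - M.disc l * M.pbar i

/-- the default-time component `Ψ^T_τ` of the clearing map: the first time `t l` at which
the capital of bank `i` is negative, and `T + 1` if the capital stays nonnegative -/
noncomputable def Ψτ (M : SM Ω n ℓ) (K : Fin (ℓ+1) → Ω → Fin n → ℝ)
    (i : Fin n) (ω : Ω) : ℝ :=
  sInf (insert (M.T + 1) ((fun l => M.t l) '' {l : Fin (ℓ+1) | K l ω i < 0}))

/-- the survival-probability component `Ψ^T_P` of the clearing map: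
`ℙ(τ_i > T | 𝓕 l)` -/
noncomputable def ΨP [MeasurableSpace Ω] (M : SM Ω n ℓ)
    (𝓕 : Fin (ℓ+1) → MeasurableSpace Ω) (μ : Measure Ω)
    (τ : Fin n → Ω → ℝ) (l : Fin (ℓ+1)) (ω : Ω) (i : Fin n) : ℝ :=
  (μ[fun ω' => indR (M.T < τ i ω') | 𝓕 l]) ω

/-- membership in the domain `𝔻^T`: adaptedness, the balance-sheet bounds on `K`,
`P` valued in `[0,1]`, and `τ` valued in `{t_0, ..., t_ℓ, T+1}` -/
def memD [MeasurableSpace Ω] (M : SM Ω n ℓ) (𝓕 : Fin (ℓ+1) → MeasurableSpace Ω)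
    (K P : Fin (ℓ+1) → Ω → Fin n → ℝ) (τ : Fin n → Ω → ℝ) : Prop :=
  (∀ l i, Measurable[𝓕 l] fun ω => K l ω i) ∧
  (∀ l i, Measurable[𝓕 l] fun ω => P l ω i) ∧
  (∀ l ω i, M.x l ω i - M.disc l * M.pbar i ≤ K l ω i) ∧
  (∀ l ω i, K l ω i ≤ M.x l ω i + M.disc l * ((∑ j, M.L j i) - M.pbar i)) ∧
  (∀ l ω i, 0 ≤ P l ω i ∧ P l ω i ≤ 1) ∧
  (∀ i ω, (∃ l, τ i ω = M.t l) ∨ τ i ω = M.T + 1)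

/-- the clearing map `Ψ^T` -/
noncomputable def Ψmap [MeasurableSpace Ω] (M : SM Ω n ℓ)
    (𝓕 : Fin (ℓ+1) → MeasurableSpace Ω) (μ : Measure Ω) (z : Tri Ω n ℓ) : Tri Ω n ℓ :=
  (fun l ω i => M.ΨK l (z.2.1 l) ω i,
   fun l ω i => M.ΨP 𝓕 μ z.2.2 l ω i,
   fun i ω => M.Ψτ z.1 i ω)

/-- the set of clearing solutions: fixed points of `Ψ^T` in `𝔻^T` -/
def clearingSet [MeasurableSpace Ω] (M : SM Ω n ℓ)
    (𝓕 : Fin (ℓ+1) → MeasurableSpace Ω) (μ : Measure Ω) : Set (Tri Ω n ℓ) :=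
  {z | M.memD 𝓕 z.1 z.2.1 z.2.2 ∧ M.Ψmap 𝓕 μ z = z}

/-- Standing assumptions of the single-maturity model. -/
structure Valid [MeasurableSpace Ω] (M : SM Ω n ℓ)
    (𝓕 : Fin (ℓ+1) → MeasurableSpace Ω) (μ : Measure Ω) : Prop where
  hn : 1 ≤ n
  hTop : (inferInstance : MeasurableSpace Ω) = ⊤
  hprob : IsProbabilityMeasure μ
  hpos : ∀ ω : Ω, 0 < μ {ω}
  hmono : Monotone 𝓕
  h0 : 𝓕 0 = ⊥
  hlast : 𝓕 (Fin.last ℓ) = (inferInstance : MeasurableSpace Ω)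
  ht : StrictMono M.t
  ht0 : M.t 0 = 0
  htT : M.t (Fin.last ℓ) = M.T
  hx : ∀ l i, Measurable[𝓕 l] fun ω => M.x l ω i
  hx0 : ∀ l ω i, 0 ≤ M.x l ω i
  hL : ∀ i j, 0 ≤ M.L i j
  hLd : ∀ i, M.L i i = 0
  hL0 : ∀ i, 0 ≤ M.L0 i
  hβ0 : 0 ≤ M.β
  hβ1 : M.β ≤ 1
  hr : 0 ≤ M.r

end SM

lemma mem_atomOf_self {Ω : Type*} (m : MeasurableSpace Ω) (ω : Ω) : ω ∈ atomOf m ω :=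
  fun _ hs => hs.2

lemma measurableSet_atomOf {Ω : Type*} [Finite Ω] (m : MeasurableSpace Ω) (ω : Ω) :
    MeasurableSet[m] (atomOf m ω) :=
  MeasurableSet.sInter (Set.to_countable _) fun _ hs => hs.1

lemma eq_on_atomOf {Ω : Type*} {m : MeasurableSpace Ω} {f : Ω → ℝ} (hf : Measurable[m] f)
    {ω ω' : Ω} (h : ω' ∈ atomOf m ω) : f ω' = f ω :=
  Set.mem_sInter.1 h (f ⁻¹' {f ω}) ⟨hf (measurableSet_singleton _), rfl⟩

lemma measurable_of_atoms {Ω : Type*} [Finite Ω] {m : MeasurableSpace Ω} {f : Ω → ℝ}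
    (hf : ∀ ω ω', ω' ∈ atomOf m ω → f ω' = f ω) : Measurable[m] f := by
  intro B hB
  have hEq : f ⁻¹' B = ⋃ ω ∈ f ⁻¹' B, atomOf m ω := by
    ext ω'
    constructor
    · intro h; exact Set.mem_biUnion h (mem_atomOf_self m ω')
    · intro h
      simp only [Set.mem_iUnion] at h
      obtain ⟨ω, hω, hmem⟩ := h
      have := hf ω ω' hmem
      simpa [Set.mem_preimage, this] using hω
  rw [hEq]
  exact MeasurableSet.biUnion (Set.to_countable _) fun ω _ => measurableSet_atomOf m ω

lemma ae_all_of_pos {Ω : Type*} [MeasurableSpace Ω] {μ : Measure Ω}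
    (hpos : ∀ ω : Ω, 0 < μ {ω}) {p : Ω → Prop} (h : ∀ᵐ ω ∂μ, p ω) : ∀ ω, p ω := by
  intro ω
  by_contra hc
  have h1 : μ {ω' | ¬ p ω'} = 0 := by rwa [MeasureTheory.ae_iff] at h
  have h2 : μ {ω} ≤ μ {ω' | ¬ p ω'} :=
    measure_mono (by intro x hx; simp only [Set.mem_singleton_iff] at hx; subst hx; exact hc)
  exact (hpos ω).ne' (le_antisymm (h1 ▸ h2) bot_le)

section Main
set_option linter.unusedSectionVars false

open SM

variable {Ω : Type*} [Fintype Ω] [MeasurableSpace Ω] {n ℓ : ℕ}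

lemma indR_nonneg (p : Prop) : 0 ≤ indR p := by
  unfold indR; split <;> norm_num

lemma indR_le_one (p : Prop) : indR p ≤ 1 := by
  unfold indR; split <;> norm_num

lemma indR_mono {p q : Prop} (h : p → q) : indR p ≤ indR q := by
  classical
  unfold indR
  split
  · rename_i hp; rw [if_pos (h hp)]
  · split <;> norm_num

/-- the domain `𝔻^T` as a subtype -/
def Dom (M : SM Ω n ℓ) (𝓕 : Fin (ℓ+1) → MeasurableSpace Ω) : Type _ :=
  {z : Tri Ω n ℓ // M.memD 𝓕 z.1 z.2.1 z.2.2}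

instance (M : SM Ω n ℓ) (𝓕 : Fin (ℓ+1) → MeasurableSpace Ω) : PartialOrder (Dom M 𝓕) :=
  Subtype.partialOrder _

section WithData

variable (M : SM Ω n ℓ) (𝓕 : Fin (ℓ+1) → MeasurableSpace Ω) (μ : Measure Ω)

/-- upper bound for the capital -/
noncomputable def hiK (l : Fin (ℓ+1)) (ω : Ω) (i : Fin n) : ℝ :=
  M.x l ω i + M.disc l * ((∑ j, M.L j i) - M.pbar i)

/-- candidate infimum in the domain -/
noncomputable def domInf (A : Set (Dom M 𝓕)) : Tri Ω n ℓ :=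
  (fun l ω i => sInf (insert (hiK M l ω i) ((fun z : Dom M 𝓕 => z.val.1 l ω i) '' A)),
   fun l ω i => sInf (insert 1 ((fun z : Dom M 𝓕 => z.val.2.1 l ω i) '' A)),
   fun i ω => sInf (insert (M.T + 1) ((fun z : Dom M 𝓕 => z.val.2.2 i ω) '' A)))

variable (hM : M.Valid 𝓕 μ)

omit [Fintype Ω] [MeasurableSpace Ω] in
lemma disc_nonneg (l : Fin (ℓ+1)) : 0 ≤ M.disc l := (Real.exp_pos _).le

include hM in
lemma lo_le_hi (l : Fin (ℓ+1)) (ω : Ω) (i : Fin n) :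
    M.x l ω i - M.disc l * M.pbar i ≤ hiK M l ω i := by
  have h1 : 0 ≤ M.disc l * ∑ j, M.L j i :=
    mul_nonneg (disc_nonneg M l) (Finset.sum_nonneg fun j _ => hM.hL j i)
  unfold hiK
  have : M.disc l * ((∑ j, M.L j i) - M.pbar i)
      = M.disc l * ∑ j, M.L j i - M.disc l * M.pbar i := by ring
  rw [this]; linarith

include hM in
lemma tle (l : Fin (ℓ+1)) : M.t l ≤ M.T := hM.htT ▸ hM.ht.monotone (Fin.le_last l)

include hM in
lemma domInf_memD (A : Set (Dom M 𝓕)) :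
    M.memD 𝓕 (domInf M 𝓕 A).1 (domInf M 𝓕 A).2.1 (domInf M 𝓕 A).2.2 := by
  refine ⟨?_, ?_, ?_, ?_, ?_, ?_⟩
  · -- K measurable
    intro l i
    apply measurable_of_atoms
    intro ω ω' h
    show sInf _ = sInf _
    have h1 : hiK M l ω' i = hiK M l ω i := by
      unfold hiK; rw [eq_on_atomOf (hM.hx l i) h]
    have h2 : (fun z : Dom M 𝓕 => z.val.1 l ω' i) '' A
        = (fun z : Dom M 𝓕 => z.val.1 l ω i) '' A :=
      Set.image_congr fun z _ => eq_on_atomOf (z.prop.1 l i) h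
    rw [h1, h2]
  · -- P measurable
    intro l i
    apply measurable_of_atoms
    intro ω ω' h
    show sInf _ = sInf _
    have h2 : (fun z : Dom M 𝓕 => z.val.2.1 l ω' i) '' A
        = (fun z : Dom M 𝓕 => z.val.2.1 l ω i) '' A :=
      Set.image_congr fun z _ => eq_on_atomOf (z.prop.2.1 l i) h
    rw [h2]
  · -- K lower bound
    intro l ω i
    apply le_csInf ⟨_, Set.mem_insert _ _⟩
    rintro b (rfl | ⟨z, _, rfl⟩)
    · exact lo_le_hi M 𝓕 μ hM l ω i
    · exact z.prop.2.2.1 l ω i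
  · -- K upper bound
    intro l ω i
    exact csInf_le ⟨M.x l ω i - M.disc l * M.pbar i, by
      rintro b (rfl | ⟨z, _, rfl⟩)
      · exact lo_le_hi M 𝓕 μ hM l ω i
      · exact z.prop.2.2.1 l ω i⟩ (Set.mem_insert _ _)
  · -- P bounds
    intro l ω i
    constructor
    · apply le_csInf ⟨_, Set.mem_insert _ _⟩
      rintro b (rfl | ⟨z, _, rfl⟩)
      · norm_num
      · exact (z.prop.2.2.2.2.1 l ω i).1
    · exact csInf_le ⟨0, by
        rintro b (rfl | ⟨z, _, rfl⟩)
        · norm_num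
        · exact (z.prop.2.2.2.2.1 l ω i).1⟩ (Set.mem_insert _ _)
  · -- τ values
    intro i ω
    have hsub : insert (M.T + 1) ((fun z : Dom M 𝓕 => z.val.2.2 i ω) '' A)
        ⊆ insert (M.T + 1) (Set.range M.t) := by
      rintro b (rfl | ⟨z, _, rfl⟩)
      · exact Set.mem_insert _ _
      · rcases z.prop.2.2.2.2.2 i ω with ⟨l, hl⟩ | hl
        · exact Set.mem_insert_of_mem _ ⟨l, hl.symm⟩
        · show z.val.2.2 i ω ∈ _; rw [hl]; exact Set.mem_insert _ _
    have hfin : (insert (M.T + 1) ((fun z : Dom M 𝓕 => z.val.2.2 i ω) '' A)).Finite :=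
      Set.Finite.subset (Set.Finite.insert _ (Set.finite_range M.t)) hsub
    have hmem := (Set.insert_nonempty _ _).csInf_mem hfin
    rcases hsub hmem with h | ⟨l, hl⟩
    · exact Or.inr h
    · exact Or.inl ⟨l, hl.symm⟩

include hM in
lemma isGLB_domInf (A : Set (Dom M 𝓕)) :
    IsGLB A (⟨domInf M 𝓕 A, domInf_memD M 𝓕 μ hM A⟩ : Dom M 𝓕) := by
  constructor
  · -- lower bound
    intro z hz
    show (⟨domInf M 𝓕 A, _⟩ : Dom M 𝓕).val ≤ z.val
    refine ⟨fun l => fun ω => fun i => ?_, fun l => fun ω => fun i => ?_, fun i => fun ω => ?_⟩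
    · exact csInf_le ⟨M.x l ω i - M.disc l * M.pbar i, by
        rintro b (rfl | ⟨z', _, rfl⟩)
        · exact lo_le_hi M 𝓕 μ hM l ω i
        · exact z'.prop.2.2.1 l ω i⟩ (Set.mem_insert_of_mem _ ⟨z, hz, rfl⟩)
    · exact csInf_le ⟨0, by
        rintro b (rfl | ⟨z', _, rfl⟩)
        · norm_num
        · exact (z'.prop.2.2.2.2.1 l ω i).1⟩ (Set.mem_insert_of_mem _ ⟨z, hz, rfl⟩)
    · refine csInf_le ⟨min (M.t 0) (M.T + 1), ?_⟩ (Set.mem_insert_of_mem _ ⟨z, hz, rfl⟩)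
      rintro b (rfl | ⟨z', _, rfl⟩)
      · exact min_le_right _ _
      · show _ ≤ z'.val.2.2 i ω
        rcases z'.prop.2.2.2.2.2 i ω with ⟨l, hl⟩ | hl
        · rw [hl]; exact le_trans (min_le_left _ _) (hM.ht.monotone (Fin.zero_le l))
        · rw [hl]; exact min_le_right _ _
  · -- greatest lower bound
    intro w hw
    show w.val ≤ (⟨domInf M 𝓕 A, _⟩ : Dom M 𝓕).val
    refine ⟨fun l => fun ω => fun i => ?_, fun l => fun ω => fun i => ?_, fun i => fun ω => ?_⟩
    · apply le_csInf ⟨_, Set.mem_insert _ _⟩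
      rintro b (rfl | ⟨z, hz, rfl⟩)
      · exact w.prop.2.2.2.1 l ω i
      · exact (hw hz).1 l ω i
    · apply le_csInf ⟨_, Set.mem_insert _ _⟩
      rintro b (rfl | ⟨z, hz, rfl⟩)
      · exact (w.prop.2.2.2.2.1 l ω i).2
      · exact (hw hz).2.1 l ω i
    · apply le_csInf ⟨_, Set.mem_insert _ _⟩
      rintro b (rfl | ⟨z, hz, rfl⟩)
      · rcases w.prop.2.2.2.2.2 i ω with ⟨l, hl⟩ | hl
        · rw [hl]; have := tle M 𝓕 μ hM l; linarith
        · rw [hl]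
      · exact (hw hz).2.2 i ω

include hM in
lemma Psi_memD (z : Tri Ω n ℓ) (hz : M.memD 𝓕 z.1 z.2.1 z.2.2) :
    M.memD 𝓕 (M.Ψmap 𝓕 μ z).1 (M.Ψmap 𝓕 μ z).2.1 (M.Ψmap 𝓕 μ z).2.2 := by
  haveI : MeasurableSingletonClass Ω := ⟨fun ω => by
    have h : MeasurableSet[⊤] ({ω} : Set Ω) := trivial
    rw [← hM.hTop] at h; exact h⟩
  haveI : IsProbabilityMeasure μ := hM.hprob
  have hm : ∀ l, 𝓕 l ≤ ‹MeasurableSpace Ω› := fun l => by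
    have h := hM.hmono (Fin.le_last l); rw [hM.hlast] at h; exact h
  refine ⟨?_, ?_, ?_, ?_, ?_, ?_⟩
  · -- ΨK measurable
    intro l i
    show Measurable[𝓕 l] fun ω => M.ΨK l (z.2.1 l) ω i
    unfold SM.ΨK
    apply Measurable.sub _ measurable_const
    apply (hM.hx l i).add
    apply Measurable.const_mul
    apply Finset.measurable_sum
    intro j _
    exact (measurable_const.add ((hz.2.1 l j).const_mul _)).const_mul _
  · -- ΨP measurable
    intro l i
    show Measurable[𝓕 l] fun ω => M.ΨP 𝓕 μ z.2.2 l ω i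
    exact stronglyMeasurable_condExp.measurable
  · -- ΨK lower bound
    intro l ω i
    show M.x l ω i - M.disc l * M.pbar i ≤ M.ΨK l (z.2.1 l) ω i
    unfold SM.ΨK
    have h1 : 0 ≤ M.disc l * ∑ j, M.L j i * (M.β + (1 - M.β) * z.2.1 l ω j) :=
      mul_nonneg (disc_nonneg M l) (Finset.sum_nonneg fun j _ =>
        mul_nonneg (hM.hL j i) (add_nonneg hM.hβ0
          (mul_nonneg (by linarith [hM.hβ1]) (hz.2.2.2.2.1 l ω j).1)))
    linarith
  · -- ΨK upper bound
    intro l ω i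
    show M.ΨK l (z.2.1 l) ω i ≤ M.x l ω i + M.disc l * ((∑ j, M.L j i) - M.pbar i)
    unfold SM.ΨK
    have h2 : (∑ j, M.L j i * (M.β + (1 - M.β) * z.2.1 l ω j)) ≤ ∑ j, M.L j i := by
      apply Finset.sum_le_sum
      intro j _
      have hp := hz.2.2.2.2.1 l ω j
      nlinarith [mul_nonneg (mul_nonneg (hM.hL j i)
        (by linarith [hM.hβ1] : (0:ℝ) ≤ 1 - M.β))
        (by linarith [hp.2] : (0:ℝ) ≤ 1 - z.2.1 l ω j)]
    have h3 := mul_le_mul_of_nonneg_left h2 (disc_nonneg M l)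
    have h4 : M.disc l * ((∑ j, M.L j i) - M.pbar i)
        = M.disc l * (∑ j, M.L j i) - M.disc l * M.pbar i := by ring
    linarith
  · -- ΨP in [0,1]
    intro l ω i
    have hint : Integrable (fun ω' => indR (M.T < z.2.2 i ω')) μ := .of_finite
    have hint1 : Integrable (fun _ : Ω => (1:ℝ)) μ := .of_finite
    have h0 : ∀ ω, 0 ≤ (μ[fun ω' => indR (M.T < z.2.2 i ω') | 𝓕 l]) ω :=
      ae_all_of_pos hM.hpos
        (condExp_nonneg (Filter.Eventually.of_forall fun ω' => indR_nonneg _))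
    have h1ae : (μ[fun ω' => indR (M.T < z.2.2 i ω') | 𝓕 l])
        ≤ᵐ[μ] (μ[(fun _ => (1:ℝ)) | 𝓕 l]) :=
      condExp_mono hint hint1 (Filter.Eventually.of_forall fun ω' => indR_le_one _)
    have hc : (μ[(fun _ => (1:ℝ)) | 𝓕 l]) = fun _ => (1:ℝ) := condExp_const (μ := μ) (hm l) (1:ℝ)
    have hae : ∀ᵐ ω' ∂μ, (μ[fun ω'' => indR (M.T < z.2.2 i ω'') | 𝓕 l]) ω' ≤ 1 := by
      filter_upwards [h1ae] with ω' ha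
      calc _ ≤ (μ[(fun _ => (1:ℝ)) | 𝓕 l]) ω' := ha
      _ = 1 := by rw [hc]
    have h1 : ∀ ω, (μ[fun ω' => indR (M.T < z.2.2 i ω') | 𝓕 l]) ω ≤ 1 :=
      ae_all_of_pos hM.hpos hae
    exact ⟨h0 ω, h1 ω⟩
  · -- Ψτ values
    intro i ω
    have hsub : insert (M.T + 1) ((fun l => M.t l) '' {l : Fin (ℓ+1) | z.1 l ω i < 0})
        ⊆ insert (M.T + 1) (Set.range M.t) :=
      Set.insert_subset_insert (Set.image_subset_range _ _)
    have hfin : (insert (M.T + 1) ((fun l => M.t l) '' {l : Fin (ℓ+1) | z.1 l ω i < 0})).Finite :=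
      Set.Finite.subset (Set.Finite.insert _ (Set.finite_range M.t)) hsub
    have hmem := (Set.insert_nonempty _ _).csInf_mem hfin
    rcases hsub hmem with h | ⟨l, hl⟩
    · exact Or.inr h
    · exact Or.inl ⟨l, hl.symm⟩

include hM in
lemma Psi_mono :
    Monotone (fun z : Dom M 𝓕 =>
      (⟨M.Ψmap 𝓕 μ z.val, Psi_memD M 𝓕 μ hM z.val z.prop⟩ : Dom M 𝓕)) := by
  haveI : MeasurableSingletonClass Ω := ⟨fun ω => by
    have h : MeasurableSet[⊤] ({ω} : Set Ω) := trivial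
    rw [← hM.hTop] at h; exact h⟩
  haveI : IsProbabilityMeasure μ := hM.hprob
  intro z z' hzz
  have h1 : z.val.1 ≤ z'.val.1 := hzz.1
  have h2 : z.val.2.1 ≤ z'.val.2.1 := hzz.2.1
  have h3 : z.val.2.2 ≤ z'.val.2.2 := hzz.2.2
  show M.Ψmap 𝓕 μ z.val ≤ M.Ψmap 𝓕 μ z'.val
  refine ⟨fun l => fun ω => fun i => ?_, ?_, fun i => fun ω => ?_⟩
  · -- K component
    show M.ΨK l (z.val.2.1 l) ω i ≤ M.ΨK l (z'.val.2.1 l) ω i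
    unfold SM.ΨK
    have hsum : (∑ j, M.L j i * (M.β + (1 - M.β) * z.val.2.1 l ω j))
        ≤ ∑ j, M.L j i * (M.β + (1 - M.β) * z'.val.2.1 l ω j) :=
      Finset.sum_le_sum fun j _ =>
        mul_le_mul_of_nonneg_left
          (add_le_add_right
            (mul_le_mul_of_nonneg_left (h2 l ω j) (by linarith [hM.hβ1] : (0:ℝ) ≤ 1 - M.β)) _)
          (hM.hL j i)
    have := mul_le_mul_of_nonneg_left hsum (disc_nonneg M l)
    linarith
  · -- P component
    intro l ω i
    show M.ΨP 𝓕 μ z.val.2.2 l ω i ≤ M.ΨP 𝓕 μ z'.val.2.2 l ω i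
    have hint : Integrable (fun ω' => indR (M.T < z.val.2.2 i ω')) μ := .of_finite
    have hint' : Integrable (fun ω' => indR (M.T < z'.val.2.2 i ω')) μ := .of_finite
    have hae : ∀ᵐ ω'' ∂μ, (μ[fun ω' => indR (M.T < z.val.2.2 i ω') | 𝓕 l]) ω''
        ≤ (μ[fun ω' => indR (M.T < z'.val.2.2 i ω') | 𝓕 l]) ω'' :=
      condExp_mono hint hint'
        (Filter.Eventually.of_forall fun ω' => indR_mono fun ht => lt_of_lt_of_le ht (h3 i ω'))
    exact ae_all_of_pos hM.hpos hae ω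
  · -- τ component
    show M.Ψτ z.val.1 i ω ≤ M.Ψτ z'.val.1 i ω
    unfold SM.Ψτ
    apply csInf_le_csInf
    · exact Set.Finite.bddBelow (Set.Finite.subset
        (Set.Finite.insert _ (Set.finite_range M.t))
        (Set.insert_subset_insert (Set.image_subset_range _ _)))
    · exact Set.insert_nonempty _ _
    · apply Set.insert_subset_insert
      apply Set.image_mono
      intro l hl
      exact lt_of_le_of_lt (h1 l ω i) hl

/-- the clearing map as a monotone self-map of the domain -/
noncomputable def PsiD (hM : M.Valid 𝓕 μ) : Dom M 𝓕 →o Dom M 𝓕 :=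
  ⟨fun z => ⟨M.Ψmap 𝓕 μ z.val, Psi_memD M 𝓕 μ hM z.val z.prop⟩, Psi_mono M 𝓕 μ hM⟩

/-- the domain is a complete lattice -/
@[reducible]
noncomputable def domCL (hM : M.Valid 𝓕 μ) : CompleteLattice (Dom M 𝓕) :=
  @completeLatticeOfInf (Dom M 𝓕) _
    ⟨fun A => ⟨domInf M 𝓕 A, domInf_memD M 𝓕 μ hM A⟩⟩
    (fun A => isGLB_domInf M 𝓕 μ hM A)

end WithData

end Main

open SM in
/-- Theorem 2.3: the set of clearing solutions, i.e. fixed points of the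
clearing map `Ψ^T` in the domain `𝔻^T`, is nonempty and forms a complete lattice under the
componentwise order; in particular it has greatest and least elements. -/
theorem single_maturity_clearing_lattice
    {Ω : Type*} [Fintype Ω] [MeasurableSpace Ω] {n ℓ : ℕ}
    (M : SM Ω n ℓ) (𝓕 : Fin (ℓ+1) → MeasurableSpace Ω) (μ : MeasureTheory.Measure Ω)
    (hM : M.Valid 𝓕 μ) :
    LatticeStructure (M.clearingSet 𝓕 μ) := by
  letI : CompleteLattice (Dom M 𝓕) := domCL M 𝓕 μ hM
  set f : Dom M 𝓕 →o Dom M 𝓕 := PsiD M 𝓕 μ hM with hf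
  -- correspondence between clearing solutions and fixed points of `f`
  have hmemfix : ∀ z ∈ M.clearingSet 𝓕 μ,
      ∃ w : Function.fixedPoints f, w.val.val = z := by
    intro z hz
    exact ⟨⟨⟨z, hz.1⟩, Subtype.ext hz.2⟩, rfl⟩
  have hfixmem : ∀ w : Function.fixedPoints f, w.val.val ∈ M.clearingSet 𝓕 μ := by
    intro w
    exact ⟨w.val.prop, congrArg Subtype.val w.prop⟩
  refine ⟨⟨(⊤ : Function.fixedPoints f).val.val, hfixmem _⟩, ?_, ?_, ?_⟩
  · -- greatest element
    refine ⟨(⊤ : Function.fixedPoints f).val.val, hfixmem _, ?_⟩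
    intro z hz
    obtain ⟨w, rfl⟩ := hmemfix z hz
    exact (le_top : w ≤ (⊤ : Function.fixedPoints f))
  · -- least element
    refine ⟨(⊥ : Function.fixedPoints f).val.val, hfixmem _, ?_⟩
    intro z hz
    obtain ⟨w, rfl⟩ := hmemfix z hz
    exact OrderBot.bot_le w
  · -- suprema and infima of subsets
    intro A hA
    set A' : Set (Function.fixedPoints f) := {w | w.val.val ∈ A} with hA'
    constructor
    · refine ⟨(sSup A').val.val, hfixmem _, ?_, ?_⟩
      · intro a ha
        obtain ⟨w, rfl⟩ := hmemfix a (hA ha)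
        exact (le_sSup (show w ∈ A' from ha) : w ≤ sSup A')
      · intro w hw hub
        obtain ⟨w', rfl⟩ := hmemfix w hw
        exact (sSup_le (fun b hb => (hub b.val.val hb : b ≤ w')) : sSup A' ≤ w')
    · refine ⟨(sInf A').val.val, hfixmem _, ?_, ?_⟩
      · intro a ha
        obtain ⟨w, rfl⟩ := hmemfix a (hA ha)
        exact (sInf_le (show w ∈ A' from ha) : sInf A' ≤ w)
      · intro w hw hlb
        obtain ⟨w', rfl⟩ := hmemfix w hw
        exact (le_sInf (fun b hb => (hlb b.val.val hb : w' ≤ b)) : w' ≤ sInf A')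


end Paper
end

section
/- Consider the single-maturity clearing model with n = 2 banks, r = 0, β = 0, ℓ = 1, T = 1, Ω = {ω_1, ω_2} with ℙ(ω_1) = ℙ(ω_2) = 1/2, F_{t_0} = {∅, Ω}, F_T = 2^Ω, external assets x(0) = (1.6, 1.6), x(T)(ω_1) = (1.9, 1.3), x(T)(ω_2) = (1.3, 1.9), interbank liabilities L_{12} = L_{21} = 1, and external liabilities L_{10} = L_{20} = 1 (so p̄_1 = p̄_2 = 2). Then the clearing map Ψ^T of this system has at least four pairwise distinct fixed points; in particular, the no-default triple (with P ≡ 1 and τ ≡ T+1) and the all-default triple (with P ≡ 0 and τ ≡ t_0) are both clearing solutions, so clearing solutions are not unique. -/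
open MeasureTheory

namespace Paper

open SM in
/-- Proposition 2.5 / Example 2.6: non-uniqueness of clearing solutions.
In the concrete two-bank, two-scenario system (zero rates, zero recovery, symmetric assets
`x(0) = (1.6,1.6)`, `x(T)(ω₁) = (1.9,1.3)`, `x(T)(ω₂) = (1.3,1.9)`, unit interbank and
external liabilities), the clearing map has at least four pairwise distinct fixed points;
in particular the no-default triple (`P ≡ 1`, `τ ≡ T+1`) and the all-default triple
(`P ≡ 0`, `τ ≡ t_0`) are clearing solutions.  Here `Ω = Bool` with `ω₁ = false`,
`ω₂ = true`, and bank indices `0, 1` standing for banks `1, 2`. -/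
theorem clearing_solutions_nonunique
    (M : SM Bool 2 1) (𝓕 : Fin 2 → MeasurableSpace Bool)
    (μ : MeasureTheory.Measure Bool) [MeasureTheory.IsProbabilityMeasure μ]
    (hμ1 : μ {false} = 1/2) (hμ2 : μ {true} = 1/2)
    (h𝓕0 : 𝓕 0 = ⊥) (h𝓕1 : 𝓕 1 = ⊤)
    (hT : M.T = 1) (ht0 : M.t 0 = 0) (ht1 : M.t 1 = 1)
    (hr : M.r = 0) (hβ : M.β = 0)
    (hx0 : ∀ ω i, M.x 0 ω i = 1.6)
    (hx11 : M.x 1 false 0 = 1.9) (hx12 : M.x 1 false 1 = 1.3)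
    (hx21 : M.x 1 true 0 = 1.3) (hx22 : M.x 1 true 1 = 1.9)
    (hL12 : M.L 0 1 = 1) (hL21 : M.L 1 0 = 1)
    (hL11 : M.L 0 0 = 0) (hL22 : M.L 1 1 = 0)
    (hL0 : ∀ i, M.L0 i = 1) :
    (∃ z1 z2 z3 z4 : Tri Bool 2 1,
      z1 ∈ M.clearingSet 𝓕 μ ∧ z2 ∈ M.clearingSet 𝓕 μ ∧
      z3 ∈ M.clearingSet 𝓕 μ ∧ z4 ∈ M.clearingSet 𝓕 μ ∧
      z1 ≠ z2 ∧ z1 ≠ z3 ∧ z1 ≠ z4 ∧ z2 ≠ z3 ∧ z2 ≠ z4 ∧ z3 ≠ z4) ∧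
    (∃ K : Fin 2 → Bool → Fin 2 → ℝ,
      (K, fun _ _ _ => (1:ℝ), fun _ _ => M.T + 1) ∈ M.clearingSet 𝓕 μ) ∧
    (∃ K : Fin 2 → Bool → Fin 2 → ℝ,
      (K, fun _ _ _ => (0:ℝ), fun _ _ => M.t 0) ∈ M.clearingSet 𝓕 μ) := by
  classical
  have fin2 : ∀ {p : Fin 2 → Prop}, p 0 → p 1 → ∀ l, p l := by
    intro p h0 h1 l
    fin_cases l
    · exact h0
    · exact h1
  -- basic numeric facts about the model
  have hdisc : ∀ l : Fin 2, M.disc l = 1 := by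
    intro l; simp [SM.disc, hr]
  have hpbar : ∀ i : Fin 2, M.pbar i = 2 := by
    refine fin2 ?_ ?_ <;>
      simp [SM.pbar, Fin.sum_univ_two, hL11, hL12, hL21, hL22, hL0] <;> norm_num
  have hsum : ∀ i : Fin 2, (∑ j, M.L j i) = 1 := by
    refine fin2 ?_ ?_ <;>
      simp [Fin.sum_univ_two, hL11, hL12, hL21, hL22]
  have hmsc : @MeasurableSingletonClass Bool ⊤ := ⟨fun _ => trivial⟩
  have hind1 : indR (M.T < M.T + 1) = 1 := by
    unfold indR; rw [if_pos]; linarith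
  have hind00 : indR (M.T < M.t 0) = 0 := by
    unfold indR; rw [if_neg]; rw [hT, ht0]; norm_num
  have hind01 : indR (M.T < M.t 1) = 0 := by
    unfold indR; rw [if_neg]; rw [hT, ht1]; norm_num
  -- helper lemmas to compute Ψτ
  have hτ_empty : ∀ (K : Fin 2 → Bool → Fin 2 → ℝ) (i : Fin 2) (ω : Bool),
      (∀ l, 0 ≤ K l ω i) → M.Ψτ K i ω = M.T + 1 := by
    intro K i ω h
    have hset : {l : Fin 2 | K l ω i < 0} = ∅ := by
      ext l; simp [not_lt.mpr (h l)]
    rw [SM.Ψτ, hset, Set.image_empty]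
    simp
  have hτ_univ : ∀ (K : Fin 2 → Bool → Fin 2 → ℝ) (i : Fin 2) (ω : Bool),
      (∀ l, K l ω i < 0) → M.Ψτ K i ω = M.t 0 := by
    intro K i ω h
    have hset : {l : Fin 2 | K l ω i < 0} = {0, 1} := by
      ext l
      revert l
      refine fin2 ?_ ?_ <;> simp [h]
    rw [SM.Ψτ, hset, Set.image_insert_eq, Set.image_singleton]
    rw [csInf_insert ((Set.toFinite _).bddBelow) (Set.insert_nonempty _ _), csInf_pair]
    rw [hT, ht0, ht1]
    norm_num
  have hτ_one : ∀ (K : Fin 2 → Bool → Fin 2 → ℝ) (i : Fin 2) (ω : Bool),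
      0 ≤ K 0 ω i → K 1 ω i < 0 → M.Ψτ K i ω = M.t 1 := by
    intro K i ω h0 h1
    have hset : {l : Fin 2 | K l ω i < 0} = {1} := by
      ext l
      revert l
      refine fin2 ?_ ?_ <;> simp [not_lt.mpr h0, h1]
    rw [SM.Ψτ, hset, Set.image_singleton, csInf_pair]
    rw [hT, ht1]
    norm_num
  -- master lemma: sufficient conditions for a triple to be a clearing solution
  have master : ∀ (v : Fin 2 → Bool → ℝ) (K P : Fin 2 → Bool → Fin 2 → ℝ)
      (τ : Fin 2 → Bool → ℝ),
      (∀ l ω i, K l ω i = M.x l ω i + v l ω - 2) →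
      (∀ l ω i, P l ω i = v l ω) →
      (∀ ω, v 0 ω = (v 1 false + v 1 true) / 2) →
      (∀ ω, 0 ≤ v 1 ω ∧ v 1 ω ≤ 1) →
      (∀ i ω, v 1 ω = indR (M.T < τ i ω)) →
      (∀ i ω, (∃ l, τ i ω = M.t l) ∨ τ i ω = M.T + 1) →
      (∀ i ω, M.Ψτ K i ω = τ i ω) →
      (K, P, τ) ∈ M.clearingSet 𝓕 μ := by
    intro v K P τ hKv hPv hv0 h01 hvτ hτmem hτfix
    have hv01 : ∀ (l : Fin 2) (ω : Bool), 0 ≤ v l ω ∧ v l ω ≤ 1 := by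
      refine fin2 ?_ ?_
      · intro ω
        rw [hv0]
        constructor
        · linarith [(h01 false).1, (h01 true).1]
        · linarith [(h01 false).2, (h01 true).2]
      · exact h01
    refine ⟨show M.memD 𝓕 K P τ from ?_, ?_⟩
    · refine ⟨?_, ?_, ?_, ?_, ?_, hτmem⟩
      · refine fin2 ?_ ?_
        · intro i
          have he : (fun ω => K 0 ω i) = fun _ => 1.6 + (v 1 false + v 1 true) / 2 - 2 := by
            funext ω; rw [hKv, hx0, hv0]
          rw [h𝓕0, he]
          exact measurable_const
        · intro i
          rw [h𝓕1]; exact fun s _ => trivial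
      · refine fin2 ?_ ?_
        · intro i
          have he : (fun ω => P 0 ω i) = fun _ => (v 1 false + v 1 true) / 2 := by
            funext ω; rw [hPv, hv0]
          rw [h𝓕0, he]
          exact measurable_const
        · intro i
          rw [h𝓕1]; exact fun s _ => trivial
      · intro l ω i
        show M.x l ω i - M.disc l * M.pbar i ≤ K l ω i
        rw [hKv, hdisc, hpbar]
        linarith [(hv01 l ω).1]
      · intro l ω i
        show K l ω i ≤ M.x l ω i + M.disc l * ((∑ j, M.L j i) - M.pbar i)
        rw [hKv, hdisc, hpbar, hsum]
        linarith [(hv01 l ω).2]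
      · intro l ω i
        show 0 ≤ P l ω i ∧ P l ω i ≤ 1
        rw [hPv]; exact hv01 l ω
    · have hK2 : ∀ (l : Fin 2) (ω : Bool) (i : Fin 2), M.ΨK l (P l) ω i = K l ω i := by
        intro l ω
        refine fin2 ?_ ?_ <;>
          (simp only [SM.ΨK, Fin.sum_univ_two, hβ, hL11, hL12, hL21, hL22, hPv, hKv,
            hdisc, hpbar]; ring)
      have hfeq : ∀ i : Fin 2, (fun ω' => indR (M.T < τ i ω')) = fun ω' => v 1 ω' := by
        intro i; funext ω'; rw [hvτ i ω']
      have hP2 : ∀ (l : Fin 2) (ω : Bool) (i : Fin 2), M.ΨP 𝓕 μ τ l ω i = P l ω i := by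
        refine fin2 (p := fun l => ∀ (ω : Bool) (i : Fin 2),
          M.ΨP 𝓕 μ τ l ω i = P l ω i) ?_ ?_
        · intro ω i
          rw [SM.ΨP, hfeq, hPv, h𝓕0, condExp_bot]
          rw [integral_fintype (Integrable.of_finite)]
          rw [Fintype.sum_bool, measureReal_def, measureReal_def, hμ1, hμ2, hv0]
          have h2 : ((1 : ENNReal) / 2).toReal = (1 : ℝ) / 2 := by
            rw [ENNReal.toReal_div]; norm_num
          rw [h2]
          simp only [smul_eq_mul]
          ring
        · intro ω i
          rw [SM.ΨP, hfeq, hPv, h𝓕1]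
          have hsm : StronglyMeasurable[⊤] (fun ω' : Bool => v 1 ω') :=
            by haveI := hmsc; exact StronglyMeasurable.of_discrete
          rw [condExp_of_stronglyMeasurable (le_of_eq rfl) hsm (Integrable.of_finite)]
      refine Prod.ext (funext fun l => funext fun ω => funext fun i => hK2 l ω i)
        (Prod.ext (funext fun l => funext fun ω => funext fun i => hP2 l ω i)
          (funext fun i => funext fun ω => hτfix i ω))
  -- z1 : no default
  have h1 : (fun (l : Fin 2) (ω : Bool) (i : Fin 2) => M.x l ω i + (1 : ℝ) - 2,
      fun (_ : Fin 2) (_ : Bool) (_ : Fin 2) => (1 : ℝ),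
      fun (_ : Fin 2) (_ : Bool) => M.T + 1) ∈ M.clearingSet 𝓕 μ := by
    apply master (fun _ _ => (1 : ℝ))
    · intro l ω i; rfl
    · intro l ω i; rfl
    · intro ω; norm_num
    · intro ω; norm_num
    · intro i ω
      rw [hind1]
    · intro i ω; exact Or.inr rfl
    · intro i ω
      apply hτ_empty
      refine fin2 ?_ ?_ <;> revert i <;> refine fin2 ?_ ?_ <;> cases ω <;>
        norm_num [hx0, hx11, hx12, hx21, hx22]
  -- z2 : all default at time 0
  have h2 : (fun (l : Fin 2) (ω : Bool) (i : Fin 2) => M.x l ω i + (0 : ℝ) - 2,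
      fun (_ : Fin 2) (_ : Bool) (_ : Fin 2) => (0 : ℝ),
      fun (_ : Fin 2) (_ : Bool) => M.t 0) ∈ M.clearingSet 𝓕 μ := by
    apply master (fun _ _ => (0 : ℝ))
    · intro l ω i; rfl
    · intro l ω i; rfl
    · intro ω; norm_num
    · intro ω; norm_num
    · intro i ω
      rw [hind00]
    · intro i ω; exact Or.inl ⟨0, rfl⟩
    · intro i ω
      apply hτ_univ
      refine fin2 ?_ ?_ <;> revert i <;> refine fin2 ?_ ?_ <;> cases ω <;>
        norm_num [hx0, hx11, hx12, hx21, hx22]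
  -- z3 : both banks default at time 1 in scenario ω₂ = true
  have h3 : (fun (l : Fin 2) (ω : Bool) (i : Fin 2) =>
        M.x l ω i + (if l = 0 then (1 : ℝ) / 2 else if ω = true then 0 else 1) - 2,
      fun (l : Fin 2) (ω : Bool) (_ : Fin 2) =>
        (if l = 0 then (1 : ℝ) / 2 else if ω = true then 0 else 1),
      fun (_ : Fin 2) (ω : Bool) => if ω = true then M.t 1 else M.T + 1)
      ∈ M.clearingSet 𝓕 μ := by
    apply master (fun l ω => if l = 0 then (1 : ℝ) / 2 else if ω = true then 0 else 1)
    · intro l ω i; rfl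
    · intro l ω i; rfl
    · intro ω; norm_num
    · intro ω; cases ω <;> norm_num
    · intro i ω
      cases ω
      · norm_num [indR, hT, ht1]
      · norm_num [indR, hT, ht1]
    · intro i ω
      cases ω
      · exact Or.inr (by norm_num)
      · exact Or.inl ⟨1, by norm_num⟩
    · intro i ω
      cases ω
      · rw [if_neg (by norm_num : ¬ (false = true))]
        apply hτ_empty
        refine fin2 ?_ ?_ <;> revert i <;> refine fin2 ?_ ?_ <;>
          norm_num [hx0, hx11, hx12, hx21, hx22]
      · rw [if_pos rfl]
        apply hτ_one <;> revert i <;> refine fin2 ?_ ?_ <;>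
          norm_num [hx0, hx11, hx12, hx21, hx22]
  -- z4 : both banks default at time 1 in scenario ω₁ = false
  have h4 : (fun (l : Fin 2) (ω : Bool) (i : Fin 2) =>
        M.x l ω i + (if l = 0 then (1 : ℝ) / 2 else if ω = true then 1 else 0) - 2,
      fun (l : Fin 2) (ω : Bool) (_ : Fin 2) =>
        (if l = 0 then (1 : ℝ) / 2 else if ω = true then 1 else 0),
      fun (_ : Fin 2) (ω : Bool) => if ω = true then M.T + 1 else M.t 1)
      ∈ M.clearingSet 𝓕 μ := by
    apply master (fun l ω => if l = 0 then (1 : ℝ) / 2 else if ω = true then 1 else 0)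
    · intro l ω i; rfl
    · intro l ω i; rfl
    · intro ω; norm_num
    · intro ω; cases ω <;> norm_num
    · intro i ω
      cases ω
      · norm_num [indR, hT, ht1]
      · norm_num [indR, hT, ht1]
    · intro i ω
      cases ω
      · exact Or.inl ⟨1, by norm_num⟩
      · exact Or.inr (by norm_num)
    · intro i ω
      cases ω
      · rw [if_neg (by norm_num : ¬ (false = true))]
        apply hτ_one <;> revert i <;> refine fin2 ?_ ?_ <;>
          norm_num [hx0, hx11, hx12, hx21, hx22]
      · rw [if_pos rfl]
        apply hτ_empty
        refine fin2 ?_ ?_ <;> revert i <;> refine fin2 ?_ ?_ <;>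
          norm_num [hx0, hx11, hx12, hx21, hx22]
  refine ⟨⟨_, _, _, _, h1, h2, h3, h4, ?_, ?_, ?_, ?_, ?_, ?_⟩, ⟨_, h1⟩, ⟨_, h2⟩⟩
  · intro h
    have h' := congrArg (fun z : Tri Bool 2 1 => z.2.2 0 false) h
    simp only at h'
    rw [hT, ht0] at h'; norm_num at h'
  · intro h
    have h' := congrArg (fun z : Tri Bool 2 1 => z.2.2 0 true) h
    simp only [ite_true] at h'
    rw [hT, ht1] at h'; norm_num at h'
  · intro h
    have h' := congrArg (fun z : Tri Bool 2 1 => z.2.2 0 false) h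
    simp only [Bool.false_eq_true, ite_false] at h'
    rw [hT, ht1] at h'; norm_num at h'
  · intro h
    have h' := congrArg (fun z : Tri Bool 2 1 => z.2.2 0 false) h
    simp only [Bool.false_eq_true, ite_false] at h'
    rw [hT, ht0] at h'; norm_num at h'
  · intro h
    have h' := congrArg (fun z : Tri Bool 2 1 => z.2.2 0 false) h
    simp only [Bool.false_eq_true, ite_false] at h'
    rw [ht0, ht1] at h'; norm_num at h'
  · intro h
    have h' := congrArg (fun z : Tri Bool 2 1 => z.2.2 0 false) h
    simp only [Bool.false_eq_true, ite_false] at h'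
    rw [hT, ht1] at h'; norm_num at h'

end Paper
end
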